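/- Let a ∈ ℝ and m > 0. Let H : (0,1) × ℝ → ℝ be twice continuously differentiable with H(t,x) > 0 and ∂_x H(t,x) > 0 for all (t,x), satisfying the backward heat equation ∂_t H(t,x) + (1/2)∂_{xx}H(t,x) = 0. Suppose that the function F(t,x) := m / H(t, −x + a·t) also satisfies ∂_t F(t,x) + (1/2)∂_{xx}F(t,x) = 0 on (0,1) × ℝ. Then a > 0 and there exists a constant c > 0 such that H(t,x) = c·exp(a x − a² t/2) for all (t,x) ∈ (0,1) × ℝ. -/

import Mathlib

open Set

/-- A function of two real variables with a time partial derivative and a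
continuous space partial derivative on `Ioo 0 1 ×ˢ univ` is Fréchet differentiable there. -/
lemma aux_fderiv (f ft fx : ℝ → ℝ → ℝ)
    (hft : ∀ t ∈ Set.Ioo (0:ℝ) 1, ∀ x : ℝ, HasDerivAt (fun τ => f τ x) (ft t x) t)
    (hfx : ∀ t ∈ Set.Ioo (0:ℝ) 1, ∀ x : ℝ, HasDerivAt (fun y => f t y) (fx t x) x)
    (hfxc : ContinuousOn (fun p : ℝ × ℝ => fx p.1 p.2) (Set.Ioo (0:ℝ) 1 ×ˢ Set.univ))
    {t x : ℝ} (ht : t ∈ Set.Ioo (0:ℝ) 1) :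
    HasFDerivAt (fun p : ℝ × ℝ => f p.1 p.2)
      (ft t x • ContinuousLinearMap.fst ℝ ℝ ℝ + fx t x • ContinuousLinearMap.snd ℝ ℝ ℝ)
      (t, x) := by
  have hsopen : IsOpen (Set.Ioo (0:ℝ) 1 ×ˢ (Set.univ : Set ℝ)) :=
    isOpen_Ioo.prod isOpen_univ
  have hmem : ((t, x) : ℝ × ℝ) ∈ Set.Ioo (0:ℝ) 1 ×ˢ (Set.univ : Set ℝ) := ⟨ht, trivial⟩
  rw [hasFDerivAt_iff_isLittleO_nhds_zero]
  rw [Asymptotics.isLittleO_iff]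
  intro ε hε
  -- continuity of fx at (t,x)
  have hca : ContinuousAt (fun p : ℝ × ℝ => fx p.1 p.2) (t, x) :=
    hfxc.continuousAt (hsopen.mem_nhds hmem)
  rcases Metric.continuousAt_iff.mp hca (ε/2) (by positivity) with ⟨δ₁, hδ₁, hball⟩
  -- the t-derivative little-o
  have hto : (fun h : ℝ => f (t + h) x - f t x - h * ft t x) =o[nhds 0] fun h => h := by
    have hto0 := hasDerivAt_iff_isLittleO.mp (hft t ht x)
    have htt : Filter.Tendsto (fun h : ℝ => t + h) (nhds 0) (nhds t) := by
      convert ((continuous_const.add continuous_id : Continuous fun h : ℝ => t + h).tendsto (0:ℝ)) using 2 <;> simp [Function.comp_def]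
    have := hto0.comp_tendsto htt
    simpa [Function.comp_def, smul_eq_mul, mul_comm, add_sub_cancel_left] using this
  rw [Asymptotics.isLittleO_iff] at hto
  have hto2 := hto (c := ε/2) (by positivity)
  -- choose a small radius
  obtain ⟨δ₂, hδ₂, hIoo⟩ : ∃ δ₂ > 0, ∀ s : ℝ, |s| < δ₂ → t + s ∈ Set.Ioo (0:ℝ) 1 := by
    refine ⟨min t (1 - t), by simp [ht.1, ht.2], fun s hs => ?_⟩
    have h1 : |s| < t := lt_of_lt_of_le hs (min_le_left _ _)
    have h2 : |s| < 1 - t := lt_of_lt_of_le hs (min_le_right _ _)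
    rw [abs_lt] at h1 h2
    constructor <;> linarith
  have hev1 : ∀ᶠ h : ℝ × ℝ in nhds 0, |h.1| < min δ₁ δ₂ ∧ |h.2| < δ₁ := by
    have : Filter.Tendsto (fun h : ℝ × ℝ => h) (nhds 0) (nhds 0) := Filter.tendsto_id
    have h1 : Filter.Tendsto (fun h : ℝ × ℝ => |h.1|) (nhds 0) (nhds 0) := by
      convert ((continuous_abs.comp continuous_fst : Continuous fun h : ℝ × ℝ => |h.1|).tendsto (0 : ℝ × ℝ)) using 2 <;> simp [Function.comp_def]
    have h2 : Filter.Tendsto (fun h : ℝ × ℝ => |h.2|) (nhds 0) (nhds 0) := by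
      convert ((continuous_abs.comp continuous_snd : Continuous fun h : ℝ × ℝ => |h.2|).tendsto (0 : ℝ × ℝ)) using 2 <;> simp [Function.comp_def]
    filter_upwards [h1.eventually (eventually_lt_nhds (lt_min hδ₁ hδ₂)),
      h2.eventually (eventually_lt_nhds hδ₁)] with h ha hb
    exact ⟨ha, hb⟩
  have hev2 : ∀ᶠ h : ℝ × ℝ in nhds 0,
      |f (t + h.1) x - f t x - h.1 * ft t x| ≤ ε/2 * |h.1| := by
    have : Filter.Tendsto (fun h : ℝ × ℝ => h.1) (nhds 0) (nhds 0) := by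
      simpa using (continuous_fst.tendsto (0 : ℝ × ℝ))
    filter_upwards [this.eventually hto2] with h hh
    simpa [Real.norm_eq_abs] using hh
  filter_upwards [hev1, hev2] with h hh hh2
  obtain ⟨hh1, hh1'⟩ := hh
  have ht1 : t + h.1 ∈ Set.Ioo (0:ℝ) 1 := hIoo h.1 (lt_of_lt_of_le hh1 (min_le_right _ _))
  -- FTC step
  have hcont : Continuous (fun u => fx (t + h.1) u) := by
    apply hfxc.comp_continuous (continuous_const.prodMk continuous_id)
    intro u; exact ⟨ht1, trivial⟩
  have hftc : f (t + h.1) (x + h.2) - f (t + h.1) x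
      = ∫ u in x..(x + h.2), fx (t + h.1) u := by
    rw [intervalIntegral.integral_eq_sub_of_hasDerivAt]
    · intro u hu; exact hfx (t + h.1) ht1 u
    · exact (hcont.intervalIntegrable _ _)
  have hest : |f (t + h.1) (x + h.2) - f (t + h.1) x - h.2 * fx t x| ≤ ε/2 * |h.2| := by
    have : f (t + h.1) (x + h.2) - f (t + h.1) x - h.2 * fx t x
        = ∫ u in x..(x + h.2), (fx (t + h.1) u - fx t x) := by
      rw [intervalIntegral.integral_sub (hcont.intervalIntegrable _ _)
        (intervalIntegrable_const), intervalIntegral.integral_const, hftc]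
      ring_nf
    rw [this]
    have := intervalIntegral.norm_integral_le_of_norm_le_const
      (C := ε/2) (f := fun u => fx (t + h.1) u - fx t x) (a := x) (b := x + h.2) ?_
    · simpa [Real.norm_eq_abs, abs_sub_comm] using this
    · intro u hu
      have hu' : |u - x| < δ₁ := by
        rcases le_or_gt x (x + h.2) with hc | hc
        · rw [Set.uIoc_of_le hc] at hu
          have : 0 < h.2 ∨ h.2 = 0 := by rcases hu with ⟨h1, h2⟩; left; linarith
          rw [abs_lt]; constructor
          · linarith [hu.1]
          · calc u - x ≤ h.2 := by linarith [hu.2]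
              _ ≤ |h.2| := le_abs_self _
              _ < δ₁ := hh1'
        · rw [Set.uIoc_of_ge hc.le] at hu
          rw [abs_lt]; constructor
          · calc -δ₁ < -|h.2| := by linarith
              _ ≤ h.2 := neg_abs_le _
              _ ≤ u - x := by linarith [hu.1]
          · linarith [hu.2]
      have hdist : dist ((t + h.1, u) : ℝ × ℝ) (t, x) < δ₁ := by
        rw [Prod.dist_eq]
        apply max_lt
        · simpa [Real.dist_eq] using lt_of_lt_of_le hh1 (min_le_left _ _)
        · simpa [Real.dist_eq] using hu'
      have := hball hdist
      simpa [Real.dist_eq, Real.norm_eq_abs] using this.le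
  -- combine
  have key : |f (t + h.1) (x + h.2) - f t x - (h.1 * ft t x + h.2 * fx t x)|
      ≤ ε/2 * |h.1| + ε/2 * |h.2| := by
    have : f (t + h.1) (x + h.2) - f t x - (h.1 * ft t x + h.2 * fx t x)
        = (f (t + h.1) (x + h.2) - f (t + h.1) x - h.2 * fx t x)
          + (f (t + h.1) x - f t x - h.1 * ft t x) := by ring
    rw [this]
    exact (abs_add_le _ _).trans (by linarith [hest, hh2])
  have hn1 : |h.1| ≤ ‖h‖ := by
    simpa [Real.norm_eq_abs] using norm_fst_le h
  have hn2 : |h.2| ≤ ‖h‖ := by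
    simpa [Real.norm_eq_abs] using norm_snd_le h
  calc ‖f ((t, x) + h).1 ((t, x) + h).2 - f t x
        - (ft t x • ContinuousLinearMap.fst ℝ ℝ ℝ + fx t x • ContinuousLinearMap.snd ℝ ℝ ℝ) h‖
      = |f (t + h.1) (x + h.2) - f t x - (h.1 * ft t x + h.2 * fx t x)| := by
        simp [Real.norm_eq_abs, smul_eq_mul]; ring_nf
    _ ≤ ε/2 * |h.1| + ε/2 * |h.2| := key
    _ ≤ ε/2 * ‖h‖ + ε/2 * ‖h‖ := by
        have h2 := hε.le
        gcongr
    _ = ε * ‖h‖ := by ring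

/-- Let `H > 0` on `(0,1) × ℝ` be twice continuously differentiable with `∂ₓH > 0`,
solving the backward heat equation `∂ₜH + (1/2)∂ₓₓH = 0`. If `F(t,x) := m/H(t, −x + a·t)`
(with `m > 0`) also solves the backward heat equation, then `a > 0` and
`H(t,x) = c·exp(a·x − a²t/2)` for some constant `c > 0`. -/
theorem stmt14 (a m : ℝ) (hm : 0 < m)
    (H Ht Hx Hxx : ℝ → ℝ → ℝ)
    (hHpos : ∀ t ∈ Set.Ioo (0:ℝ) 1, ∀ x : ℝ, 0 < H t x)
    (hHxpos : ∀ t ∈ Set.Ioo (0:ℝ) 1, ∀ x : ℝ, 0 < Hx t x)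
    (hHt : ∀ t ∈ Set.Ioo (0:ℝ) 1, ∀ x : ℝ, HasDerivAt (fun τ => H τ x) (Ht t x) t)
    (hHx : ∀ t ∈ Set.Ioo (0:ℝ) 1, ∀ x : ℝ, HasDerivAt (fun x' => H t x') (Hx t x) x)
    (hHxx : ∀ t ∈ Set.Ioo (0:ℝ) 1, ∀ x : ℝ, HasDerivAt (fun x' => Hx t x') (Hxx t x) x)
    (hHtc : ContinuousOn (fun p : ℝ × ℝ => Ht p.1 p.2) (Set.Ioo (0:ℝ) 1 ×ˢ Set.univ))
    (hHxc : ContinuousOn (fun p : ℝ × ℝ => Hx p.1 p.2) (Set.Ioo (0:ℝ) 1 ×ˢ Set.univ))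
    (hHxxc : ContinuousOn (fun p : ℝ × ℝ => Hxx p.1 p.2) (Set.Ioo (0:ℝ) 1 ×ˢ Set.univ))
    (hHheat : ∀ t ∈ Set.Ioo (0:ℝ) 1, ∀ x : ℝ, Ht t x + (1 / 2) * Hxx t x = 0)
    (F Ft Fx Fxx : ℝ → ℝ → ℝ)
    (hF : ∀ t x, F t x = m / H t (-x + a * t))
    (hFt : ∀ t ∈ Set.Ioo (0:ℝ) 1, ∀ x : ℝ, HasDerivAt (fun τ => F τ x) (Ft t x) t)
    (hFx : ∀ t ∈ Set.Ioo (0:ℝ) 1, ∀ x : ℝ, HasDerivAt (fun x' => F t x') (Fx t x) x)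
    (hFxx : ∀ t ∈ Set.Ioo (0:ℝ) 1, ∀ x : ℝ, HasDerivAt (fun x' => Fx t x') (Fxx t x) x)
    (hFheat : ∀ t ∈ Set.Ioo (0:ℝ) 1, ∀ x : ℝ, Ft t x + (1 / 2) * Fxx t x = 0) :
    0 < a ∧ ∃ c : ℝ, 0 < c ∧
      ∀ t ∈ Set.Ioo (0:ℝ) 1, ∀ x : ℝ, H t x = c * Real.exp (a * x - a ^ 2 * t / 2) := by
  -- inner function derivative
  have hinner : ∀ t x' : ℝ, HasDerivAt (fun x'' : ℝ => -x'' + a * t) (-1) x' := by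
    intro t x'
    simpa using ((hasDerivAt_id x').neg.add_const (a * t))
  -- Step 1: formula for Fx everywhere
  have hFx' : ∀ t ∈ Set.Ioo (0:ℝ) 1, ∀ x' : ℝ,
      Fx t x' = m * Hx t (-x' + a*t) / (H t (-x' + a*t))^2 := by
    intro t ht x'
    have hG : HasDerivAt (fun x'' => H t (-x'' + a*t)) (Hx t (-x' + a*t) * (-1)) x' :=
      (hHx t ht _).comp x' (hinner t x')
    have hne : H t (-x' + a*t) ≠ 0 := (hHpos t ht _).ne'
    have hdiv := (hasDerivAt_const x' m).div hG hne
    have heqf : (fun x'' => F t x'') = fun x'' => m / H t (-x'' + a*t) := funext (hF t)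
    have hFder : HasDerivAt (fun x'' => F t x'')
        ((0 * H t (-x' + a*t) - m * (Hx t (-x' + a*t) * (-1))) / (H t (-x' + a*t))^2) x' := by
      rw [heqf]; exact hdiv
    have := (hFx t ht x').unique hFder
    rw [this]; ring
  -- Step 2: the key relation Hx = a * H
  have key : ∀ t ∈ Set.Ioo (0:ℝ) 1, ∀ y : ℝ, Hx t y = a * H t y := by
    intro t ht y
    obtain ⟨x, rfl⟩ : ∃ x : ℝ, y = -x + a * t := ⟨a * t - y, by ring⟩
    have hHy := hHpos t ht (-x + a * t)
    have hHxy := hHxpos t ht (-x + a * t)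
    have hne : H t (-x + a * t) ≠ 0 := hHy.ne'
    -- second space derivative of F
    have hFxxval : Fxx t x = (m * (Hxx t (-x + a*t) * (-1)) * (H t (-x + a*t))^2
        - m * Hx t (-x + a*t) * (((2:ℕ):ℝ) * (H t (-x + a*t))^(2-1) * (Hx t (-x + a*t) * (-1))))
          / ((H t (-x + a*t))^2)^2 := by
      have heqf : (fun x'' => Fx t x'') = fun x'' => m * Hx t (-x'' + a*t) / (H t (-x'' + a*t))^2 :=
        funext (hFx' t ht)
      have hN : HasDerivAt (fun x'' => m * Hx t (-x'' + a*t)) (m * (Hxx t (-x + a*t) * (-1))) x :=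
        ((hHxx t ht (-x + a*t)).comp x (hinner t x)).const_mul m
      have hG : HasDerivAt (fun x'' => H t (-x'' + a*t)) (Hx t (-x + a*t) * (-1)) x :=
        (hHx t ht (-x + a*t)).comp x (hinner t x)
      have hD := hG.pow 2
      have hDne : (H t (-x + a*t))^2 ≠ 0 := pow_ne_zero _ hne
      have hdiv := hN.div hD hDne
      have hFder : HasDerivAt (fun x'' => Fx t x'')
          ((m * (Hxx t (-x + a*t) * (-1)) * (H t (-x + a*t))^2
            - m * Hx t (-x + a*t) * (((2:ℕ):ℝ) * (H t (-x + a*t))^(2-1) * (Hx t (-x + a*t) * (-1))))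
              / ((H t (-x + a*t))^2)^2) x := by
        rw [heqf]; exact hdiv
      exact (hFxx t ht x).unique hFder
    -- time derivative of F
    have hgamma : HasDerivAt (fun τ : ℝ => ((τ, -x + a * τ) : ℝ × ℝ)) ((1, a) : ℝ × ℝ) t := by
      have h2 : HasDerivAt (fun τ : ℝ => -x + a * τ) a t := by
        simpa using ((hasDerivAt_id t).const_mul a).const_add (-x)
      exact (hasDerivAt_id t).prodMk h2
    have hfd := aux_fderiv H Ht Hx hHt hHx hHxc (t := t) (x := -x + a * t) ht
    have hgt : HasDerivAt (fun τ => H τ (-x + a * τ))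
        (Ht t (-x + a*t) + Hx t (-x + a*t) * a) t := by
      have := hfd.comp_hasDerivAt t hgamma
      simpa [Function.comp_def] using this
    have hFtval : Ft t x = (0 * H t (-x + a*t) - m * (Ht t (-x + a*t) + Hx t (-x + a*t) * a))
        / (H t (-x + a*t))^2 := by
      have hdiv := (hasDerivAt_const t m).div hgt hne
      have heqf : (fun τ => F τ x) = fun τ => m / H τ (-x + a * τ) := by
        funext τ; exact hF τ x
      have hFder : HasDerivAt (fun τ => F τ x)
          ((0 * H t (-x + a*t) - m * (Ht t (-x + a*t) + Hx t (-x + a*t) * a))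
            / (H t (-x + a*t))^2) t := by
        rw [heqf]; exact hdiv
      exact (hFt t ht x).unique hFder
    -- plug into the heat equation for F
    have heq := hFheat t ht x
    rw [hFtval, hFxxval] at heq
    have hHeq : Ht t (-x + a*t) = -(1/2) * Hxx t (-x + a*t) := by
      linarith [hHheat t ht (-x + a*t)]
    rw [hHeq] at heq
    set A := H t (-x + a*t)
    set B := Hx t (-x + a*t)
    set C := Hxx t (-x + a*t)
    norm_num at heq
    field_simp at heq
    -- now heq is a polynomial identity implying B = a A
    have h10 : (4*m*A^3*B) * (B - a*A) = 0 := by linear_combination (2*A^3) * heq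
    have h11 : 0 < 4*m*A^3*B :=
      mul_pos (mul_pos (mul_pos (by norm_num : (0:ℝ) < 4) hm) (pow_pos hHy 3)) hHxy
    have h12 := (mul_eq_zero.mp h10).resolve_left h11.ne'
    linarith
  -- a > 0
  have hhalf : (1/2 : ℝ) ∈ Set.Ioo (0:ℝ) 1 := by norm_num
  have ha : 0 < a := by
    have h1 := key (1/2) hhalf 0
    have h2 := hHxpos (1/2) hhalf 0
    have h3 := hHpos (1/2) hhalf 0
    nlinarith
  refine ⟨ha, H (1/2) 0 * Real.exp (a^2 * (1/2) / 2), mul_pos (hHpos _ hhalf 0) (Real.exp_pos _), ?_⟩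
  -- spatial structure
  have hspace : ∀ t ∈ Set.Ioo (0:ℝ) 1, ∀ x : ℝ, H t x = H t 0 * Real.exp (a * x) := by
    intro t ht x
    have hφ : ∀ x' : ℝ, HasDerivAt (fun u => H t u * Real.exp (-(a*u))) 0 x' := by
      intro x'
      have hexp : HasDerivAt (fun u : ℝ => Real.exp (-(a*u))) (Real.exp (-(a*x')) * (-a)) x' := by
        have h1 : HasDerivAt (fun u : ℝ => -(a*u)) (-a) x' := by
          exact ((hasDerivAt_id x').const_mul a).neg.congr_deriv (by ring)
        exact h1.exp
      have := (hHx t ht x').mul hexp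
      refine this.congr_deriv ?_
      rw [key t ht x']; ring
    have hc := is_const_of_deriv_eq_zero (f := fun u => H t u * Real.exp (-(a*u)))
      (fun u => (hφ u).differentiableAt) (fun u => (hφ u).deriv) x 0
    have hx0 : H t x * Real.exp (-(a*x)) = H t 0 := by simpa using hc
    have hepos : Real.exp (-(a*x)) ≠ 0 := (Real.exp_pos _).ne'
    have := congrArg (· * Real.exp (a*x)) hx0
    rw [mul_assoc, ← Real.exp_add] at this
    simpa using this
  -- temporal structure
  have hHxx_eq : ∀ t ∈ Set.Ioo (0:ℝ) 1, ∀ x : ℝ, Hxx t x = a^2 * H t x := by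
    intro t ht x
    have heqf : (fun x' => Hx t x') = fun x' => a * H t x' := funext (key t ht)
    have hder : HasDerivAt (fun x' => Hx t x') (a * Hx t x) x := by
      rw [heqf]; exact (hHx t ht x).const_mul a
    have := (hHxx t ht x).unique hder
    rw [this, key t ht x]; ring
  have hψ : ∀ t ∈ Set.Ioo (0:ℝ) 1,
      HasDerivAt (fun τ => H τ 0 * Real.exp (a^2 * τ / 2)) 0 t := by
    intro t ht
    have hexp : HasDerivAt (fun τ : ℝ => Real.exp (a^2 * τ / 2))
        (Real.exp (a^2 * t / 2) * (a^2/2)) t := by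
      have h1 : HasDerivAt (fun τ : ℝ => a^2 * τ / 2) (a^2/2) t := by
        have h0 := ((hasDerivAt_id t).const_mul (a^2)).div_const 2
        simpa using h0
      exact h1.exp
    have := (hHt t ht 0).mul hexp
    refine this.congr_deriv ?_
    have h1 : Ht t 0 = -(1/2) * Hxx t 0 := by linarith [hHheat t ht 0]
    rw [h1, hHxx_eq t ht 0]; ring
  have hconst : ∀ t ∈ Set.Ioo (0:ℝ) 1,
      H t 0 * Real.exp (a^2 * t / 2) = H (1/2) 0 * Real.exp (a^2 * (1/2) / 2) := by
    intro t ht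
    exact (convex_Ioo (0:ℝ) 1).is_const_of_fderivWithin_eq_zero
      (f := fun τ => H τ 0 * Real.exp (a^2 * τ / 2))
      (fun τ hτ => (hψ τ hτ).differentiableAt.differentiableWithinAt)
      (fun τ hτ => by
        rw [fderivWithin_of_isOpen isOpen_Ioo hτ]
        have h5 := (hψ τ hτ).hasFDerivAt.fderiv
        rw [h5]; ext; simp) ht hhalf
  intro t ht x
  have h1 := hconst t ht
  have h2 : H t 0 = H (1/2) 0 * Real.exp (a^2 * (1/2) / 2) * Real.exp (-(a^2 * t / 2)) := by
    have h3 : Real.exp (a^2*t/2) * Real.exp (-(a^2*t/2)) = 1 := by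
      rw [← Real.exp_add]; simp
    calc H t 0 = H t 0 * (Real.exp (a^2*t/2) * Real.exp (-(a^2*t/2))) := by rw [h3]; ring
      _ = (H t 0 * Real.exp (a^2*t/2)) * Real.exp (-(a^2*t/2)) := by ring
      _ = _ := by rw [h1]
  rw [hspace t ht x, h2, mul_assoc, ← Real.exp_add]
  congr 1
  exact congrArg Real.exp (by ring)
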